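/- Let f : ℝ → ℝ be continuous and nonnegative and let y > 0 satisfy f(y/2) + 4·f(2y) > 0. Then, as ε → 0⁺, the ratio ((1/2)∫_{2y−2ε}^{2y+2ε} x·f(x) dx − ∫_{y/2−ε/2}^{y/2+ε/2} x·f(x) dx) / (∫_{2y−2ε}^{2y+2ε} f(x) dx + ∫_{y/2−ε/2}^{y/2+ε/2} f(x) dx) tends to (−(y/2)·f(y/2) + 4y·f(2y)) / (f(y/2) + 4·f(2y)); moreover this limit is strictly positive if and only if 8·f(2y) > f(y/2). -/

import Mathlib

open MeasureTheory Filter intervalIntegral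

theorem shrink_deriv (h : ℝ → ℝ) (hc : Continuous h) (a c : ℝ) :
    HasDerivAt (fun ε : ℝ => ∫ x in (a - c * ε)..(a + c * ε), h x) (2 * c * h a) 0 := by
  have hint : ∀ u v : ℝ, IntervalIntegrable h volume u v := fun u v =>
    hc.intervalIntegrable u v
  have h1 : HasDerivAt (fun t : ℝ => ∫ x in a..t, h x) (h a) a :=
    integral_hasDerivAt_right (hint a a) (hc.stronglyMeasurableAtFilter _ _)
      hc.continuousAt
  have hp : HasDerivAt (fun ε : ℝ => a + c * ε) c 0 := by
    simpa using ((hasDerivAt_id (0:ℝ)).const_mul c).const_add a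
  have hm : HasDerivAt (fun ε : ℝ => a - c * ε) (-c) 0 := by
    have : HasDerivAt (fun ε : ℝ => a - c * ε) (0 - c * 1) 0 :=
      (hasDerivAt_const 0 a).sub ((hasDerivAt_id (0:ℝ)).const_mul c)
    simpa using this
  have h1p : HasDerivAt (fun t : ℝ => ∫ x in a..t, h x) (h a) ((fun ε : ℝ => a + c * ε) 0) := by
    simpa using h1
  have h1m : HasDerivAt (fun t : ℝ => ∫ x in a..t, h x) (h a) ((fun ε : ℝ => a - c * ε) 0) := by
    simpa using h1
  have h4 := (h1p.comp 0 hp).sub (h1m.comp 0 hm)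
  have heq : (fun ε : ℝ => ((fun t : ℝ => ∫ x in a..t, h x) ∘ fun ε : ℝ => a + c * ε) ε -
      ((fun t : ℝ => ∫ x in a..t, h x) ∘ fun ε : ℝ => a - c * ε) ε) =
      fun ε : ℝ => ∫ x in (a - c * ε)..(a + c * ε), h x := by
    funext ε
    simp only [Function.comp]
    rw [integral_interval_sub_left (hint a _) (hint a _)]
  rw [Pi.sub_def, heq] at h4
  refine h4.congr_deriv ?_
  ring

/-- Allocate-the-second-envelope strategy: the expected benefit of switching, given
the observed content lies in `(y - ε, y + ε]`, tends to
`(-(y/2) f(y/2) + 4y f(2y)) / (f(y/2) + 4 f(2y))` as `ε → 0⁺`; this limit is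
strictly positive iff `8 f(2y) > f(y/2)`. -/
theorem allocate_second_expected_benefit (f : ℝ → ℝ) (hf : Continuous f)
    (hf0 : ∀ x, 0 ≤ f x) (y : ℝ) (hy : 0 < y)
    (hpos : 0 < f (y / 2) + 4 * f (2 * y)) :
    Tendsto (fun ε : ℝ =>
        ((1 / 2) * (∫ x in (2 * y - 2 * ε)..(2 * y + 2 * ε), x * f x) -
            ∫ x in (y / 2 - ε / 2)..(y / 2 + ε / 2), x * f x) /
          ((∫ x in (2 * y - 2 * ε)..(2 * y + 2 * ε), f x) +
            ∫ x in (y / 2 - ε / 2)..(y / 2 + ε / 2), f x))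
      (nhdsWithin 0 (Set.Ioi 0))
      (nhds ((-(y / 2) * f (y / 2) + 4 * y * f (2 * y)) / (f (y / 2) + 4 * f (2 * y)))) ∧
    (0 < (-(y / 2) * f (y / 2) + 4 * y * f (2 * y)) / (f (y / 2) + 4 * f (2 * y)) ↔
      f (y / 2) < 8 * f (2 * y)) := by
  set g : ℝ → ℝ := fun x => x * f x with hg
  have hgc : Continuous g := continuous_id.mul hf
  set N : ℝ → ℝ := fun ε =>
    (1 / 2) * (∫ x in (2 * y - 2 * ε)..(2 * y + 2 * ε), g x) -
      ∫ x in (y / 2 - ε / 2)..(y / 2 + ε / 2), g x with hNdef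
  set D : ℝ → ℝ := fun ε =>
    (∫ x in (2 * y - 2 * ε)..(2 * y + 2 * ε), f x) +
      ∫ x in (y / 2 - ε / 2)..(y / 2 + ε / 2), f x with hDdef
  set N' : ℝ := -(y / 2) * f (y / 2) + 4 * y * f (2 * y) with hN'def
  set D' : ℝ := f (y / 2) + 4 * f (2 * y) with hD'def
  have hbound : ∀ ε : ℝ, y / 2 - ε / 2 = y / 2 - (1/2) * ε ∧ y / 2 + ε / 2 = y / 2 + (1/2) * ε :=
    fun ε => ⟨by ring, by ring⟩
  have hN : HasDerivAt N N' 0 := by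
    have A := (shrink_deriv g hgc (2 * y) 2).const_mul (1/2 : ℝ)
    have B := shrink_deriv g hgc (y / 2) (1/2)
    have := A.sub B
    rw [Pi.sub_def] at this
    have heq : N = fun ε : ℝ => (1/2) * (∫ x in (2*y - 2*ε)..(2*y + 2*ε), g x) -
        ∫ x in (y/2 - (1/2)*ε)..(y/2 + (1/2)*ε), g x := by
      funext ε
      rw [hNdef]
      simp only [(hbound ε).1, (hbound ε).2]
    rw [heq]
    refine this.congr_deriv ?_
    simp only [hN'def, hg]
    ring
  have hD : HasDerivAt D D' 0 := by
    have A := shrink_deriv f hf (2 * y) 2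
    have B := shrink_deriv f hf (y / 2) (1/2)
    have := A.add B
    rw [Pi.add_def] at this
    have heq : D = fun ε : ℝ => (∫ x in (2*y - 2*ε)..(2*y + 2*ε), f x) +
        ∫ x in (y/2 - (1/2)*ε)..(y/2 + (1/2)*ε), f x := by
      funext ε
      rw [hDdef]
      simp only [(hbound ε).1, (hbound ε).2]
    rw [heq]
    refine this.congr_deriv ?_
    simp only [hD'def]
    ring
  have hN0 : N 0 = 0 := by
    simp [hNdef]
  have hD0 : D 0 = 0 := by
    simp [hDdef]
  have hD'pos : 0 < D' := hpos
  have hsub : Set.Ioi (0:ℝ) ⊆ {(0:ℝ)}ᶜ := fun x hx => ne_of_gt hx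
  have hNslope : Tendsto (fun ε => N ε / ε) (nhdsWithin 0 (Set.Ioi 0)) (nhds N') := by
    have := hasDerivAt_iff_tendsto_slope.mp hN
    have h2 := this.mono_left (nhdsWithin_mono 0 hsub)
    refine h2.congr' ?_
    filter_upwards [self_mem_nhdsWithin] with ε hε
    simp [slope, hN0, div_eq_inv_mul]
  have hDslope : Tendsto (fun ε => D ε / ε) (nhdsWithin 0 (Set.Ioi 0)) (nhds D') := by
    have := hasDerivAt_iff_tendsto_slope.mp hD
    have h2 := this.mono_left (nhdsWithin_mono 0 hsub)
    refine h2.congr' ?_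
    filter_upwards [self_mem_nhdsWithin] with ε hε
    simp [slope, hD0, div_eq_inv_mul]
  have hdiv : Tendsto (fun ε => (N ε / ε) / (D ε / ε)) (nhdsWithin 0 (Set.Ioi 0))
      (nhds (N' / D')) := hNslope.div hDslope (ne_of_gt hD'pos)
  constructor
  · refine hdiv.congr' ?_
    filter_upwards [self_mem_nhdsWithin] with ε hε
    have hε' : (ε:ℝ) ≠ 0 := ne_of_gt hε
    rw [div_div_div_cancel_right₀]
    exact hε'
  · simp only [hN'def, hD'def] at hD'pos ⊢
    rw [div_pos_iff]
    constructor
    · rintro (⟨h1, _⟩ | ⟨_, h2⟩)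
      · nlinarith
      · linarith
    · intro h
      left
      exact ⟨by nlinarith, hD'pos⟩
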